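/- Let Γ be a ranked poset and let I = ⊕_d I_d be the graded two-sided ideal of T(W) generated by I_2 as above. For any d ≥ 2, if u_x ∈ W^{⊗(d−1)} for each x ∈ Γ′ and Σ_{x ∈ Γ′} r_x ⊗ u_x lies in I_d (the degree-d component of I), then r_x ⊗ u_x ∈ I_d for every x ∈ Γ′. -/

import Mathlib

set_option linter.unusedSectionVars false
set_option linter.unusedVariables false

open scoped Classical

variable {Γ : Type*} [PartialOrder Γ] [OrderBot Γ] [Fintype Γ]

/-- `rk` is a rank function for the finite poset `Γ` (with least element `⊥`):
the bottom has rank `0` and ranks increase by one along covering relations.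
Equivalently, all maximal chains in `[⊥, x]` have the same length `rk x`. -/
def IsRanked (rk : Γ → ℕ) : Prop :=
  rk ⊥ = 0 ∧ ∀ a b : Γ, a ⋖ b → rk b = rk a + 1

/-- `rankSet rk x n` is the set `S_x(n) = {y ≤ x : rk x - rk y = n}`. -/
def rankSet (rk : Γ → ℕ) (x : Γ) (n : ℕ) : Set Γ := {y | y ≤ x ∧ rk y + n = rk x}

/-- `Γ` is uniform: for each `a`, the equivalence relation on `S_a(1)` generated by
`b ∼ c` whenever `S_b(1) ∩ S_c(1) ≠ ∅` has at most one equivalence class. -/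
def Uniform (rk : Γ → ℕ) : Prop :=
  ∀ a b c : Γ, b ∈ rankSet rk a 1 → c ∈ rankSet rk a 1 →
    Relation.EqvGen
      (fun u v => u ∈ rankSet rk a 1 ∧ v ∈ rankSet rk a 1 ∧
        (rankSet rk u 1 ∩ rankSet rk v 1).Nonempty)
      b c

/-- `Γ' = Γ \ {⊥}`, indexing the generators `r_x`. -/
abbrev Vert (Γ : Type*) [PartialOrder Γ] [OrderBot Γ] := {x : Γ // x ≠ (⊥ : Γ)}

variable (F : Type*) [Field F]

/-- The generator `r_x` of the tensor algebra `T(W)` on the vector space `W` with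
basis `{r_x : x ∈ Γ'}`, realized as the free algebra on `Γ'`. -/
noncomputable def gen (x : Vert Γ) : FreeAlgebra F (Vert Γ) := FreeAlgebra.ι F x

/-- `r_x(n) = Σ_{y ∈ S_x(n)} r_y ∈ W` (which is `0` for `n ≥ rk x`). -/
noncomputable def rxn (rk : Γ → ℕ) (x : Γ) (n : ℕ) : FreeAlgebra F (Vert Γ) :=
  ∑ y ∈ Finset.univ.filter (fun y : Vert Γ => y.1 ∈ rankSet rk x n), gen F y

/-- The quadratic relations spanning `I_2`: `r_x ⊗ r_y` for `y ∉ S_x(1)`, and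
`r_x ⊗ r_x(1)`, for `x, y ∈ Γ'`. -/
inductive GRel (F : Type*) [Field F] {Γ : Type*} [PartialOrder Γ] [OrderBot Γ]
    [Fintype Γ] (rk : Γ → ℕ) :
    FreeAlgebra F (Vert Γ) → FreeAlgebra F (Vert Γ) → Prop
  | mono (x y : Vert Γ) (h : y.1 ∉ rankSet rk x.1 1) : GRel F rk (gen F x * gen F y) 0
  | adj (x : Vert Γ) : GRel F rk (gen F x * rxn F rk x.1 1) 0

/-- The quadratic algebra `R(Γ) = T(W)/I`, where `I` is the two-sided ideal
generated by `I_2`. -/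
abbrev RGamma (rk : Γ → ℕ) := RingQuot (GRel F rk)

/-- The image of `r_x` in `R(Γ)`. -/
noncomputable def rbar (rk : Γ → ℕ) (x : Vert Γ) : RGamma F rk :=
  RingQuot.mkAlgHom F (GRel F rk) (gen F x)

/-- The image of `r_x(n)` in `R(Γ)`. -/
noncomputable def rxnbar (rk : Γ → ℕ) (x : Γ) (n : ℕ) : RGamma F rk :=
  RingQuot.mkAlgHom F (GRel F rk) (rxn F rk x n)

/-- The right ideal `r_x R = {r_x · s : s ∈ R}`, as an `F`-submodule of `R(Γ)`. -/
noncomputable def rIdeal (rk : Γ → ℕ) (x : Vert Γ) : Submodule F (RGamma F rk) :=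
  LinearMap.range (LinearMap.mulLeft F (rbar F rk x))

/-- `H_x(n) = Σ_{y ∈ Γ', y ∉ S_x(n)} r_y R`. -/
noncomputable def Hsub (rk : Γ → ℕ) (x : Γ) (n : ℕ) : Submodule F (RGamma F rk) :=
  ⨆ (y : Vert Γ) (_ : y.1 ∉ rankSet rk x n), rIdeal F rk y

/-- The degree-one component `W` of `T(W)`: the span of the generators `r_x`. -/
noncomputable def Wsub : Submodule F (FreeAlgebra F (Vert Γ)) :=
  Submodule.span F (Set.range (gen F (Γ := Γ)))

/-- The two-sided ideal `I = ⊕_d I_d` of `T(W)` generated by `I_2`, as an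
`F`-submodule: the span of all `a·s·b` with `s` one of the quadratic relations. -/
noncomputable def Irel (rk : Γ → ℕ) : Submodule F (FreeAlgebra F (Vert Γ)) :=
  Submodule.span F {t | ∃ a b s, GRel F rk s 0 ∧ t = a * s * b}

section Aux

variable (F : Type*) [Field F] (X : Type*)

theorem aux_basis_eq (m : FreeMonoid X) :
    FreeAlgebra.basisFreeMonoid F X m =
      (FreeAlgebra.equivMonoidAlgebraFreeMonoid (R := F) (X := X)).symm
        (MonoidAlgebra.single m 1) := by
  simp only [FreeAlgebra.basisFreeMonoid, Module.Basis.map_apply, Finsupp.coe_basisSingleOne,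
    AlgEquiv.toLinearEquiv_apply]
  rfl

theorem aux_basis_one : FreeAlgebra.basisFreeMonoid F X 1 = 1 := by
  rw [aux_basis_eq, ← MonoidAlgebra.one_def, map_one]

theorem aux_mul_basis (y : X) (m : FreeMonoid X) :
    FreeAlgebra.ι F y * FreeAlgebra.basisFreeMonoid F X m =
      FreeAlgebra.basisFreeMonoid F X (FreeMonoid.of y * m) := by
  have hι : FreeAlgebra.ι F y =
      (FreeAlgebra.equivMonoidAlgebraFreeMonoid (R := F) (X := X)).symm
        (MonoidAlgebra.single (FreeMonoid.of y) 1) := by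
    have : (FreeAlgebra.equivMonoidAlgebraFreeMonoid (R := F) (X := X)) (FreeAlgebra.ι F y) =
        MonoidAlgebra.single (FreeMonoid.of y) 1 := by
      simp [FreeAlgebra.equivMonoidAlgebraFreeMonoid]
    rw [← this, AlgEquiv.symm_apply_apply]
  rw [hι, aux_basis_eq, aux_basis_eq, ← map_mul, MonoidAlgebra.single_mul_single, one_mul]

/-- The projection onto the span of words beginning with the letter `x`. -/
noncomputable def auxProj (x : X) : FreeAlgebra F X →ₗ[F] FreeAlgebra F X :=
  (FreeAlgebra.basisFreeMonoid F X).constr F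
    (fun m => if m.toList.head? = some x then FreeAlgebra.basisFreeMonoid F X m else 0)

theorem auxProj_gen_mul (x y : X) (t : FreeAlgebra F X) :
    auxProj F X x (FreeAlgebra.ι F y * t) = if y = x then FreeAlgebra.ι F y * t else 0 := by
  have h : (auxProj F X x).comp (LinearMap.mulLeft F (FreeAlgebra.ι F y)) =
      if y = x then LinearMap.mulLeft F (FreeAlgebra.ι F y) else 0 := by
    apply (FreeAlgebra.basisFreeMonoid F X).ext
    intro m
    simp only [LinearMap.comp_apply, LinearMap.mulLeft_apply]
    rw [aux_mul_basis, auxProj, Module.Basis.constr_basis]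
    have hl : (FreeMonoid.of y * m).toList.head? = some y := by
      simp [FreeMonoid.toList_mul, FreeMonoid.toList_of]
    rw [hl]
    by_cases hxy : y = x
    · simp [hxy, aux_mul_basis]
    · have : ¬ (some y = some x) := by simpa using hxy
      simp [hxy, this]
  by_cases hxy : y = x
  · have := LinearMap.congr_fun h t
    simpa [hxy] using this
  · have := LinearMap.congr_fun h t
    simpa [hxy] using this

theorem aux_mem_span_decomp (a : FreeAlgebra F X) :
    a ∈ Submodule.span F
      ({1} ∪ {v : FreeAlgebra F X | ∃ y t, v = FreeAlgebra.ι F y * t}) := by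
  have htop : a ∈ Submodule.span F (Set.range (FreeAlgebra.basisFreeMonoid F X)) := by
    rw [Module.Basis.span_eq]; trivial
  refine Submodule.span_mono ?_ htop
  rintro _ ⟨m, rfl⟩
  induction m using FreeMonoid.recOn with
  | one => left; simp [aux_basis_one]
  | of_mul y m _ =>
    right
    exact ⟨y, FreeAlgebra.basisFreeMonoid F X m, (aux_mul_basis F X y m).symm⟩

end Aux


theorem gen_def (x : Vert Γ) : gen F x = FreeAlgebra.ι F x := rfl

theorem proj_Irel_mem (rk : Γ → ℕ) (x : Vert Γ) {v : FreeAlgebra F (Vert Γ)}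
    (hv : v ∈ Irel F rk) : auxProj F (Vert Γ) x v ∈ Irel F rk := by
  induction hv using Submodule.span_induction with
  | mem t ht =>
    obtain ⟨a, b, s, hs, rfl⟩ := ht
    obtain ⟨z, w, rfl⟩ : ∃ z w, s = gen F z * w := by
      cases hs with
      | mono z y h => exact ⟨z, gen F y, rfl⟩
      | adj z => exact ⟨z, rxn F rk z.1 1, rfl⟩
    have ha := aux_mem_span_decomp F (Vert Γ) a
    refine Submodule.span_induction
      (p := fun a' _ => auxProj F (Vert Γ) x (a' * (gen F z * w) * b) ∈ Irel F rk)
      ?_ ?_ ?_ ?_ ha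
    · rintro a' (h1 | ⟨y, t, rfl⟩)
      · rcases Set.mem_singleton_iff.mp h1 with rfl
        rw [one_mul, mul_assoc, gen_def, auxProj_gen_mul]
        split
        · refine Submodule.subset_span ⟨1, b, gen F z * w, hs, ?_⟩
          rw [one_mul, gen_def, mul_assoc]
        · exact zero_mem _
      · rw [mul_assoc, mul_assoc, auxProj_gen_mul]
        split
        · refine Submodule.subset_span ⟨gen F y * t, b, gen F z * w, hs, ?_⟩
          simp only [gen_def, mul_assoc]
        · exact zero_mem _
    · simp
    · intro p q hp hq ihp ihq
      rw [add_mul, add_mul, map_add]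
      exact add_mem ihp ihq
    · intro c p hp ih
      rw [smul_mul_assoc, smul_mul_assoc, map_smul]
      exact Submodule.smul_mem _ _ ih
  | zero => simp
  | add p q hp hq ihp ihq => rw [map_add]; exact add_mem ihp ihq
  | smul c p hp ih => rw [map_smul]; exact Submodule.smul_mem _ _ ih

theorem proj_Wpow_mem (x : Vert Γ) (k : ℕ) {v : FreeAlgebra F (Vert Γ)}
    (hv : v ∈ (Wsub F (Γ := Γ)) ^ (k + 1)) :
    auxProj F (Vert Γ) x v ∈ (Wsub F (Γ := Γ)) ^ (k + 1) := by
  rw [pow_succ'] at hv ⊢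
  refine Submodule.mul_induction_on hv ?_ ?_
  · intro m hm n hn
    refine Submodule.span_induction
      (p := fun m' _ => auxProj F (Vert Γ) x (m' * n) ∈ Wsub F * (Wsub F (Γ := Γ)) ^ k)
      ?_ ?_ ?_ ?_ hm
    · rintro _ ⟨y, rfl⟩
      rw [gen_def, auxProj_gen_mul]
      split
      · rw [← gen_def]
        exact Submodule.mul_mem_mul (Submodule.subset_span ⟨y, rfl⟩) hn
      · exact zero_mem _
    · simp
    · intro p q hp hq ihp ihq
      rw [add_mul, map_add]
      exact add_mem ihp ihq
    · intro c p hp ih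
      rw [smul_mul_assoc, map_smul]
      exact Submodule.smul_mem _ _ ih
  · intro p q hp hq
    rw [map_add]
    exact add_mem hp hq


/-- Let `Γ` be a ranked poset.  For `d ≥ 2`, if `u_x ∈ W^{⊗(d-1)}`
for each `x ∈ Γ'` and `Σ_{x ∈ Γ'} r_x ⊗ u_x ∈ I_d = I ∩ W^{⊗d}`, then
`r_x ⊗ u_x ∈ I_d` for every `x ∈ Γ'`. -/
theorem summand_mem_ideal (rk : Γ → ℕ) (hrk : IsRanked rk)
    (d : ℕ) (hd : 2 ≤ d) (u : Vert Γ → FreeAlgebra F (Vert Γ))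
    (hu : ∀ x : Vert Γ, u x ∈ (Wsub F (Γ := Γ)) ^ (d - 1))
    (hsum : (∑ x : Vert Γ, gen F x * u x) ∈ Irel F rk ⊓ (Wsub F (Γ := Γ)) ^ d) :
    ∀ x : Vert Γ, gen F x * u x ∈ Irel F rk ⊓ (Wsub F (Γ := Γ)) ^ d := by
  intro x
  obtain ⟨k, hk⟩ : ∃ k, d = k + 1 := ⟨d - 1, by omega⟩
  subst hk
  have hproj : auxProj F (Vert Γ) x (∑ y : Vert Γ, gen F y * u y) = gen F x * u x := by
    rw [map_sum]
    have h1 : ∀ y : Vert Γ,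
        auxProj F (Vert Γ) x (gen F y * u y) = if y = x then gen F y * u y else 0 :=
      fun y => by
        rw [gen_def, auxProj_gen_mul]
        exact ite_congr rfl (fun _ => rfl) (fun _ => rfl)
    simp_rw [h1]
    rw [Finset.sum_ite_eq' Finset.univ x]
    simp
  constructor
  · rw [← hproj]
    exact proj_Irel_mem F rk x hsum.1
  · rw [← hproj]
    exact proj_Wpow_mem F x k hsum.2
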